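/- Let G₁ ⊔ G₂ be a partition of the internal gates of a monotone cycluit C, and define the frontier F as the set of gates in one part that are inputs to a gate of the other part. Then the sequence U_1 ⊆ U_2 ⊆ ... of frontier subsets arising in the partition-based evaluation algorithm (where U_i is the set of frontier gates evaluated to true after i rounds of alternately saturating each part) is monotone increasing and stabilizes after at most |F| + 1 rounds; consequently, the partition-based evaluation using |F| + 2 rounds computes exactly the set of gates true under the standard least-fixpoint evaluation of C. -/
import Mathlib


inductive GateTy | inp | and | or
deriving DecidableEq

/-- Least set containing `Z` and closed under the OR/AND rules, restricted to gates in `Dom`. -/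
def SubEval {G : Type*} (W : G → G → Prop) (μ : G → GateTy) (Z Dom : Set G) : Set G :=
  ⋂₀ {S | Z ⊆ S ∧
      (∀ g ∈ Dom, μ g = GateTy.or → (∃ u, W u g ∧ u ∈ S) → g ∈ S) ∧
      (∀ g ∈ Dom, μ g = GateTy.and → (∀ u, W u g → u ∈ S) → g ∈ S)}

/-- Gates that are true initially: true inputs and constant AND-gates. -/
def CST {G : Type*} (W : G → G → Prop) (μ : G → GateTy) (ν : G → Bool) : Set G :=
  {g | μ g = GateTy.inp ∧ ν g = true} ∪ {g | μ g = GateTy.and ∧ ∀ u, ¬ W u g}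

/-- The standard least-fixpoint evaluation of a monotone cycluit. -/
def Eval {G : Type*} (W : G → G → Prop) (μ : G → GateTy) (ν : G → Bool) : Set G :=
  SubEval W μ (CST W μ ν) {g | μ g ≠ GateTy.inp}

/-- The internal gates assigned to side `b` by the evaluation partition `side`. -/
def PartSide {G : Type*} (μ : G → GateTy) (side : G → Bool) (b : Bool) : Set G :=
  {g | μ g ≠ GateTy.inp ∧ side g = b}

/-- The frontier gates feeding into side `b`: gates of the other part that are inputs
to some gate of part `b`. -/
def Frontier {G : Type*} (W : G → G → Prop) (μ : G → GateTy) (side : G → Bool)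
    (b : Bool) : Set G :=
  {g ∈ PartSide μ side (!b) | ∃ g', g' ∈ PartSide μ side b ∧ W g g'}

/-- One round of the partition-based evaluation: saturate each part separately from the
constants and the currently-true frontier gates. -/
def RoundStep {G : Type*} (W : G → G → Prop) (μ : G → GateTy) (ν : G → Bool)
    (side : G → Bool) (S : Set G) : Set G :=
  SubEval W μ (CST W μ ν ∪ (S ∩ Frontier W μ side true)) (PartSide μ side true) ∪
  SubEval W μ (CST W μ ν ∪ (S ∩ Frontier W μ side false)) (PartSide μ side false) ∪
  CST W μ ν

section Aux

variable {G : Type*} (W : G → G → Prop) (μ : G → GateTy)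

def PBEClosed (Dom S : Set G) : Prop :=
  (∀ g ∈ Dom, μ g = GateTy.or → (∃ u, W u g ∧ u ∈ S) → g ∈ S) ∧
  (∀ g ∈ Dom, μ g = GateTy.and → (∀ u, W u g → u ∈ S) → g ∈ S)

lemma subeval_le {Z Dom S : Set G} (h1 : Z ⊆ S) (h2 : PBEClosed W μ Dom S) :
    SubEval W μ Z Dom ⊆ S :=
  Set.sInter_subset_of_mem ⟨h1, h2.1, h2.2⟩

lemma le_subeval {Z Dom : Set G} : Z ⊆ SubEval W μ Z Dom := by
  intro x hx
  rw [SubEval, Set.mem_sInter]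
  exact fun S hS => hS.1 hx

lemma subeval_closed {Z Dom : Set G} : PBEClosed W μ Dom (SubEval W μ Z Dom) := by
  constructor
  · rintro g hg hor ⟨u, hWu, hu⟩
    rw [SubEval, Set.mem_sInter]
    intro S hS
    refine hS.2.1 g hg hor ⟨u, hWu, ?_⟩
    rw [SubEval, Set.mem_sInter] at hu
    exact hu S hS
  · intro g hg hand h
    rw [SubEval, Set.mem_sInter]
    intro S hS
    refine hS.2.2 g hg hand (fun u hWu => ?_)
    have := h u hWu
    rw [SubEval, Set.mem_sInter] at this
    exact this S hS

lemma subeval_mono {Z Z' Dom Dom' : Set G} (hZ : Z ⊆ Z') (hD : Dom ⊆ Dom') :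
    SubEval W μ Z Dom ⊆ SubEval W μ Z' Dom' := by
  refine subeval_le W μ (hZ.trans (le_subeval W μ)) ?_
  obtain ⟨h1, h2⟩ := subeval_closed W μ (Z := Z') (Dom := Dom')
  exact ⟨fun g hg => h1 g (hD hg), fun g hg => h2 g (hD hg)⟩

lemma subeval_sub {Z Dom : Set G} : SubEval W μ Z Dom ⊆ Z ∪ Dom := by
  refine subeval_le W μ Set.subset_union_left ?_
  exact ⟨fun g hg _ _ => Or.inr hg, fun g hg _ _ => Or.inr hg⟩

variable (ν : G → Bool) (side : G → Bool)

lemma roundstep_eq (b : Bool) (S : Set G) :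
    RoundStep W μ ν side S =
      SubEval W μ (CST W μ ν ∪ (S ∩ Frontier W μ side b)) (PartSide μ side b) ∪
      SubEval W μ (CST W μ ν ∪ (S ∩ Frontier W μ side (!b))) (PartSide μ side (!b)) ∪
      CST W μ ν := by
  cases b
  · simp only [Bool.not_false]
    rw [RoundStep, Set.union_comm
      (SubEval W μ (CST W μ ν ∪ S ∩ Frontier W μ side false) (PartSide μ side false))
      (SubEval W μ (CST W μ ν ∪ S ∩ Frontier W μ side true) (PartSide μ side true))]
  · rfl

lemma cst_sub_roundstep (S : Set G) : CST W μ ν ⊆ RoundStep W μ ν side S :=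
  Set.subset_union_right

lemma roundstep_mono {S S' : Set G} (h : S ⊆ S') :
    RoundStep W μ ν side S ⊆ RoundStep W μ ν side S' := by
  refine Set.union_subset_union ?_ subset_rfl
  exact Set.union_subset_union
    (subeval_mono W μ (Set.union_subset_union subset_rfl (Set.inter_subset_inter_left _ h)) subset_rfl)
    (subeval_mono W μ (Set.union_subset_union subset_rfl (Set.inter_subset_inter_left _ h)) subset_rfl)

lemma iter_mono (i : ℕ) :
    (RoundStep W μ ν side)^[i] (CST W μ ν) ⊆ (RoundStep W μ ν side)^[i + 1] (CST W μ ν) := by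
  induction i with
  | zero =>
    rw [Function.iterate_zero_apply, Function.iterate_one]
    exact cst_sub_roundstep W μ ν side _
  | succ n ih =>
    rw [Function.iterate_succ_apply', Function.iterate_succ_apply']
    exact roundstep_mono W μ ν side ih

lemma iter_range (i : ℕ) :
    (RoundStep W μ ν side)^[i] (CST W μ ν) ⊆
      CST W μ ν ∪ PartSide μ side true ∪ PartSide μ side false := by
  induction i with
  | zero =>
    rw [Function.iterate_zero_apply]
    exact Set.subset_union_left.trans Set.subset_union_left
  | succ n ih =>
    rw [Function.iterate_succ_apply', RoundStep]
    intro u hu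
    rcases hu with (h1 | h2) | h3
    · rcases subeval_sub W μ h1 with (hc | hf) | hp
      · exact Or.inl (Or.inl hc)
      · exact Or.inr hf.2.1
      · exact Or.inl (Or.inr hp)
    · rcases subeval_sub W μ h2 with (hc | hf) | hp
      · exact Or.inl (Or.inl hc)
      · exact Or.inl (Or.inr hf.2.1)
      · exact Or.inr hp
    · exact Or.inl (Or.inl h3)

lemma partL (i : ℕ) (b : Bool) :
    (RoundStep W μ ν side)^[i] (CST W μ ν) ∩ PartSide μ side b ⊆
      CST W μ ν ∪ SubEval W μ
        (CST W μ ν ∪ ((RoundStep W μ ν side)^[i] (CST W μ ν) ∩ Frontier W μ side b))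
        (PartSide μ side b) := by
  induction i with
  | zero =>
    rw [Function.iterate_zero_apply]
    exact fun u hu => Or.inl hu.1
  | succ n ih =>
    intro u hu
    obtain ⟨huT, huP⟩ := hu
    rw [Function.iterate_succ_apply', roundstep_eq W μ ν side b] at huT
    have hZmono : SubEval W μ
        (CST W μ ν ∪ ((RoundStep W μ ν side)^[n] (CST W μ ν) ∩ Frontier W μ side b))
        (PartSide μ side b) ⊆ SubEval W μ
        (CST W μ ν ∪ ((RoundStep W μ ν side)^[n + 1] (CST W μ ν) ∩ Frontier W μ side b))
        (PartSide μ side b) :=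
      subeval_mono W μ (Set.union_subset_union subset_rfl
        (Set.inter_subset_inter_left _ (iter_mono W μ ν side n))) subset_rfl
    rcases huT with (h1 | h2) | h3
    · exact Or.inr (hZmono h1)
    · rcases subeval_sub W μ h2 with (hc | hf) | hp
      · exact Or.inl hc
      · -- hf : u ∈ T n ∩ Frontier (!b); Frontier (!b) ⊆ PartSide (!!b) = PartSide b
        have hub : u ∈ PartSide μ side (!(!b)) := hf.2.1
        rw [Bool.not_not] at hub
        rcases ih ⟨hf.1, hub⟩ with hc | hs
        · exact Or.inl hc
        · exact Or.inr (hZmono hs)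
      · -- u ∈ PartSide (!b), but u ∈ PartSide b : contradiction
        exact absurd (huP.2.symm.trans hp.2) (by cases b <;> simp)
    · exact Or.inl h3

end Aux
theorem partition_based_evaluation {G : Type*} [Fintype G]
    (W : G → G → Prop) (μ : G → GateTy)
    (hinp : ∀ g, μ g = GateTy.inp → ∀ u, ¬ W u g)
    (ν : G → Bool) (side : G → Bool) :
    let F : Set G := Frontier W μ side true ∪ Frontier W μ side false
    let T : ℕ → Set G := fun i => (RoundStep W μ ν side)^[i] (CST W μ ν)
    (∀ i : ℕ, ∀ b : Bool, T i ∩ Frontier W μ side b ⊆ T (i + 1) ∩ Frontier W μ side b) ∧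
    T (F.ncard + 1) = T (F.ncard + 2) ∧
    T (F.ncard + 2) = Eval W μ ν := by
  intro F T
  have hT : ∀ j : ℕ, T (j + 1) = RoundStep W μ ν side (T j) :=
    fun j => Function.iterate_succ_apply' _ _ _
  have hstep : ∀ i, T i ⊆ T (i + 1) := fun i => iter_mono W μ ν side i
  have hmonoT : Monotone T := monotone_nat_of_le_succ hstep
  -- congruence of RoundStep through F
  have key : ∀ (S : Set G) (b : Bool),
      S ∩ Frontier W μ side b = (S ∩ F) ∩ Frontier W μ side b := by
    have hFb : ∀ b : Bool, F ∩ Frontier W μ side b = Frontier W μ side b := by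
      intro b
      apply Set.inter_eq_self_of_subset_right
      cases b
      · exact Set.subset_union_right
      · exact Set.subset_union_left
    intro S b
    rw [Set.inter_assoc, hFb]
  have hcongr : ∀ S S' : Set G, S ∩ F = S' ∩ F →
      RoundStep W μ ν side S = RoundStep W μ ν side S' := by
    intro S S' h
    rw [RoundStep, RoundStep, key S true, key S false, h, ← key S' true, ← key S' false]
  -- stabilization index
  have hstab : ∃ i ≤ F.ncard, T i ∩ F = T (i + 1) ∩ F := by
    by_contra hcon
    push_neg at hcon
    have hlt : ∀ i ≤ F.ncard, (T i ∩ F).ncard < (T (i + 1) ∩ F).ncard := by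
      intro i hi
      exact Set.ncard_lt_ncard
        ((Set.inter_subset_inter_left _ (hstep i)).ssubset_of_ne (hcon i hi))
        (Set.toFinite _)
    have hge : ∀ i ≤ F.ncard + 1, i ≤ (T i ∩ F).ncard := by
      intro i
      induction i with
      | zero => intro _; exact Nat.zero_le _
      | succ n ih =>
        intro hi
        have h1 := hlt n (by omega)
        have h2 := ih (by omega)
        omega
    have h3 := hge (F.ncard + 1) le_rfl
    have h4 := Set.ncard_le_ncard (Set.inter_subset_right :
      T (F.ncard + 1) ∩ F ⊆ F) F.toFinite
    omega
  obtain ⟨i, hi, heq⟩ := hstab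
  have hfix1 : T (i + 1) = T (i + 2) := by
    rw [hT i, hT (i + 1)]
    exact hcongr _ _ heq
  have hfixall : ∀ j, i + 1 ≤ j → T j = T (i + 1) := by
    intro j hj
    induction j, hj using Nat.le_induction with
    | base => rfl
    | succ n hn ih =>
      rw [hT n, ih, ← hT (i + 1), ← hfix1]
  refine ⟨fun i b => Set.inter_subset_inter_left _ (hstep i), ?_, ?_⟩
  · rw [hfixall (F.ncard + 1) (by omega), hfixall (F.ncard + 2) (by omega)]
  · -- the main equality
    have hNfix : RoundStep W μ ν side (T (F.ncard + 2)) = T (F.ncard + 2) := by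
      rw [← hT (F.ncard + 2), hfixall (F.ncard + 2 + 1) (by omega),
        hfixall (F.ncard + 2) (by omega)]
    set N := F.ncard + 2 with hN
    -- upper bound : T j ⊆ Eval
    have hEvalClosed : PBEClosed W μ {g | μ g ≠ GateTy.inp} (Eval W μ ν) :=
      subeval_closed W μ
    have hTE : ∀ j, T j ⊆ Eval W μ ν := by
      intro j
      induction j with
      | zero =>
        show (RoundStep W μ ν side)^[0] (CST W μ ν) ⊆ _
        rw [Function.iterate_zero_apply]
        exact le_subeval W μ
      | succ n ih =>
        rw [hT n, RoundStep]
        have hpart : ∀ b : Bool,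
            SubEval W μ (CST W μ ν ∪ (T n ∩ Frontier W μ side b)) (PartSide μ side b)
              ⊆ Eval W μ ν := by
          intro b
          refine subeval_le W μ ?_ ?_
          · exact Set.union_subset (le_subeval W μ) (Set.inter_subset_left.trans ih)
          · exact ⟨fun g hg => hEvalClosed.1 g hg.1, fun g hg => hEvalClosed.2 g hg.1⟩
        exact Set.union_subset (Set.union_subset (hpart true) (hpart false)) (le_subeval W μ)
    -- key membership claim
    have hM : ∀ u g (b : Bool), u ∈ T N → W u g → g ∈ PartSide μ side b →
        u ∈ SubEval W μ (CST W μ ν ∪ (T N ∩ Frontier W μ side b)) (PartSide μ side b) := by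
      intro u g b huT hW hg
      by_cases hui : μ u = GateTy.inp
      · have huC : u ∈ CST W μ ν := by
          rcases iter_range W μ ν side N huT with (hc | hp) | hp
          · exact hc
          · exact absurd hui hp.1
          · exact absurd hui hp.1
        exact le_subeval W μ (Or.inl huC)
      · by_cases hside : side u = b
        · rcases partL W μ ν side N b ⟨huT, ⟨hui, hside⟩⟩ with hc | hs
          · exact le_subeval W μ (Or.inl hc)
          · exact hs
        · have hside' : side u = !b := Bool.eq_not_iff.mpr hside
          have huF : u ∈ Frontier W μ side b := ⟨⟨hui, hside'⟩, g, hg, hW⟩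
          exact le_subeval W μ (Or.inr ⟨huT, huF⟩)
    have hsubN : ∀ b : Bool,
        SubEval W μ (CST W μ ν ∪ (T N ∩ Frontier W μ side b)) (PartSide μ side b)
          ⊆ T N := by
      intro b
      have h1 : SubEval W μ (CST W μ ν ∪ (T N ∩ Frontier W μ side b)) (PartSide μ side b)
          ⊆ RoundStep W μ ν side (T N) := by
        rw [roundstep_eq W μ ν side b]
        exact Set.subset_union_left.trans Set.subset_union_left
      exact h1.trans hNfix.subset
    have hETN : Eval W μ ν ⊆ T N := by
      refine subeval_le W μ ?_ ⟨?_, ?_⟩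
      · have h0 : T 0 ⊆ T N := hmonoT (Nat.zero_le N)
        rw [show T 0 = CST W μ ν from Function.iterate_zero_apply _ _] at h0
        exact h0
      · rintro g hg hor ⟨u, hWu, huT⟩
        have hgP : g ∈ PartSide μ side (side g) := ⟨hg, rfl⟩
        exact hsubN (side g)
          ((subeval_closed W μ).1 g hgP hor ⟨u, hWu, hM u g _ huT hWu hgP⟩)
      · intro g hg hand h
        have hgP : g ∈ PartSide μ side (side g) := ⟨hg, rfl⟩
        exact hsubN (side g)
          ((subeval_closed W μ).2 g hgP hand (fun u hWu => hM u g _ (h u hWu) hWu hgP))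
    exact Set.Subset.antisymm (hTE N) hETN
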